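/- Let g : ℝ₊ → ℝ be C^{2n}, β ≥ 0, γ ≥ β²/4, and set ψ_g(x) = g(x + β√x + γ) + g(x − β√x + γ). Then ψ_g is C^n on ℝ₊ and its n-th derivative satisfies ψ_g^{(n)}(x) = ψ_{g^{(n)}}(x) + Σ_{j=1}^n C(n,j) β^{2j} ∫_0^1 g^{(n+j)}(x + β(2u−1)√x + γ) · (u − u²)^{j−1}/(j−1)! du. -/

import Mathlib

open Real intervalIntegral MeasureTheory Set Filter Topology

noncomputable def psG (g : ℝ → ℝ) (m : ℕ) : ℝ → ℝ := iteratedDerivWithin m g (Set.Ici 0)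

noncomputable def psTh (β γ x u : ℝ) : ℝ := x + β * (2 * u - 1) * Real.sqrt x + γ

noncomputable def psW (j : ℕ) (u : ℝ) : ℝ := (u - u ^ 2) ^ (j - 1) / (Nat.factorial (j - 1))

noncomputable def psJ (g : ℝ → ℝ) (β γ : ℝ) (m j : ℕ) (x : ℝ) : ℝ :=
  ∫ u in (0:ℝ)..1, psG g m (psTh β γ x u) * psW j u

noncomputable def psF (g : ℝ → ℝ) (β γ : ℝ) (k : ℕ) (x : ℝ) : ℝ :=
  (psG g k (x + β * Real.sqrt x + γ) + psG g k (x - β * Real.sqrt x + γ)) +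
    ∑ j ∈ Finset.Icc 1 k, (k.choose j : ℝ) * β ^ (2 * j) * psJ g β γ (k + j) j x

section basic

variable {β γ : ℝ} (hβ : 0 ≤ β) (hγ : β ^ 2 / 4 ≤ γ)

lemma psTh_nonneg (hβ : 0 ≤ β) (hγ : β ^ 2 / 4 ≤ γ) {x u : ℝ} (hx : 0 ≤ x)
    (hu0 : 0 ≤ u) (hu1 : u ≤ 1) : 0 ≤ psTh β γ x u := by
  have hs : Real.sqrt x ^ 2 = x := Real.sq_sqrt hx
  have hs0 : 0 ≤ Real.sqrt x := Real.sqrt_nonneg x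
  have h1 : 0 ≤ (Real.sqrt x + β * (2 * u - 1) / 2) ^ 2 := sq_nonneg _
  have h2 : 0 ≤ β ^ 2 * u * (1 - u) :=
    mul_nonneg (mul_nonneg (sq_nonneg β) hu0) (by linarith)
  unfold psTh
  nlinarith [sq_nonneg (2 * u - 1)]

lemma psTh_pos (hβ : 0 ≤ β) (hγ : β ^ 2 / 4 ≤ γ) {x u : ℝ} (hx : 0 < x)
    (hu0 : 0 < u) (hu1 : u < 1) : 0 < psTh β γ x u := by
  have hs : Real.sqrt x ^ 2 = x := Real.sq_sqrt hx.le
  have hs0 : 0 < Real.sqrt x := Real.sqrt_pos.2 hx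
  have h1 : 0 ≤ (Real.sqrt x + β * (2 * u - 1) / 2) ^ 2 := sq_nonneg _
  unfold psTh
  rcases eq_or_lt_of_le hβ with hb | hb
  · subst hb; nlinarith
  · have h2 : 0 < β ^ 2 * u * (1 - u) :=
      mul_pos (mul_pos (by positivity) hu0) (by linarith)
    nlinarith [sq_nonneg (2 * u - 1)]

lemma psTh_one (x : ℝ) : psTh β γ x 1 = x + β * Real.sqrt x + γ := by
  unfold psTh; ring_nf

lemma psTh_zero (x : ℝ) : psTh β γ x 0 = x - β * Real.sqrt x + γ := by
  unfold psTh; ring_nf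

lemma psW_one (u : ℝ) : psW 1 u = 1 := by simp [psW]

lemma psW_cont (j : ℕ) : Continuous (psW j) := by
  unfold psW; fun_prop

lemma psW_bound {j : ℕ} {u : ℝ} (h0 : 0 ≤ u) (h1 : u ≤ 1) : |psW j u| ≤ 1 := by
  have h2 : 0 ≤ u - u ^ 2 := by nlinarith
  have h3 : u - u ^ 2 ≤ 1 := by nlinarith
  have h4 : (u - u ^ 2) ^ (j - 1) ≤ 1 := pow_le_one₀ h2 h3
  have h5 : (0:ℝ) < (j - 1).factorial := by positivity
  have h6 : (1:ℝ) ≤ (j - 1).factorial := by exact_mod_cast Nat.one_le_iff_ne_zero.2 (Nat.factorial_ne_zero _)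
  rw [psW, abs_div, abs_of_nonneg (pow_nonneg h2 _), abs_of_pos h5]
  rw [div_le_one h5]
  exact h4.trans h6

lemma psW_deriv (i : ℕ) (u : ℝ) :
    HasDerivAt (psW (i + 2)) ((1 - 2 * u) * psW (i + 1) u) u := by
  have h : HasDerivAt (fun u : ℝ => u - u ^ 2) (1 - 2 * u) u := by
    simpa using ((hasDerivAt_id' u).fun_sub ((hasDerivAt_pow 2 u)))
  have h2 : HasDerivAt (fun u : ℝ => (u - u ^ 2) ^ (i + 1))
      ((i + 1 : ℕ) * (u - u ^ 2) ^ i * (1 - 2 * u)) u := by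
    simpa using (h.fun_pow (i + 1))
  have h3 := h2.div_const ((i + 1).factorial : ℝ)
  have : ((i + 1 : ℕ) : ℝ) * (u - u ^ 2) ^ i * (1 - 2 * u) / ((i + 1).factorial : ℝ)
      = (1 - 2 * u) * psW (i + 1) u := by
    rw [psW, Nat.add_sub_cancel]
    have : ((i + 1).factorial : ℝ) = (i + 1 : ℕ) * (i.factorial : ℝ) := by
      rw [Nat.factorial_succ]; push_cast; ring
    rw [this]
    have hi : ((i + 1 : ℕ) : ℝ) ≠ 0 := by positivity
    have hf : (i.factorial : ℝ) ≠ 0 := by positivity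
    field_simp
  rw [this] at h3
  rw [show psW (i + 2) = fun x : ℝ => (x - x ^ 2) ^ (i + 1) / ((i + 1).factorial : ℝ) from funext fun x => rfl]
  simpa [psW] using h3

lemma psW_zero_at_zero {i : ℕ} : psW (i + 2) 0 = 0 := by
  simp [psW]

lemma psW_zero_at_one {i : ℕ} : psW (i + 2) 1 = 0 := by
  simp [psW]

end basic

section gfacts

variable {n : ℕ} {g : ℝ → ℝ} (hg : ContDiffOn ℝ (2 * n) g (Set.Ici 0))
include hg

lemma psG_cont {m : ℕ} (hm : m ≤ 2 * n) : ContinuousOn (psG g m) (Set.Ici 0) :=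
  hg.continuousOn_iteratedDerivWithin (by exact_mod_cast hm) (uniqueDiffOn_Ici 0)

lemma psG_hasDeriv {m : ℕ} (hm : m < 2 * n) {x : ℝ} (hx : x ∈ Set.Ici (0:ℝ)) :
    HasDerivWithinAt (psG g m) (psG g (m + 1) x) (Set.Ici 0) x := by
  have hdiff := hg.differentiableOn_iteratedDerivWithin (by exact_mod_cast hm) (uniqueDiffOn_Ici 0)
  have h := (hdiff x hx).hasDerivWithinAt
  have e : psG g (m + 1) x = derivWithin (psG g m) (Set.Ici 0) x :=
    congrFun iteratedDerivWithin_succ x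
  rw [psG, e]
  exact h

lemma psG_hasDerivAt {m : ℕ} (hm : m < 2 * n) {x : ℝ} (hx : 0 < x) :
    HasDerivAt (psG g m) (psG g (m + 1) x) x :=
  (psG_hasDeriv hg hm (le_of_lt hx)).hasDerivAt (Ici_mem_nhds hx)

end gfacts

section integrands

variable {n : ℕ} {g : ℝ → ℝ} {β γ : ℝ}

lemma psTh_cont_u (x : ℝ) : Continuous (fun u => psTh β γ x u) := by
  unfold psTh; fun_prop

lemma psTh_cont_x (u : ℝ) : Continuous (fun x => psTh β γ x u) := by
  unfold psTh
  exact (continuous_id.add ((continuous_const.mul continuous_sqrt))).add continuous_const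

lemma psTh_affine (x u : ℝ) :
    psTh β γ x u = (2 * β * Real.sqrt x) * u + (x + γ - β * Real.sqrt x) := by
  unfold psTh; ring

lemma psTh_hasDerivAt_u (x u : ℝ) :
    HasDerivAt (fun u => psTh β γ x u) (2 * β * Real.sqrt x) u := by
  have : (fun u => psTh β γ x u)
      = fun u : ℝ => (2 * β * Real.sqrt x) * u + (x + γ - β * Real.sqrt x) := by
    funext u; exact psTh_affine x u
  rw [this]
  simpa using ((hasDerivAt_id' u).const_mul (2 * β * Real.sqrt x)).add_const (x + γ - β * Real.sqrt x)

variable (hβ : 0 ≤ β) (hγ : β ^ 2 / 4 ≤ γ) (hg : ContDiffOn ℝ (2 * n) g (Set.Ici 0))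
include hβ hγ hg

lemma comp_contOn {m : ℕ} (hm : m ≤ 2 * n) {x : ℝ} (hx : 0 ≤ x) :
    ContinuousOn (fun u => psG g m (psTh β γ x u)) (Set.Icc 0 1) := by
  refine (psG_cont hg hm).comp (psTh_cont_u x).continuousOn ?_
  intro u hu
  exact psTh_nonneg hβ hγ hx hu.1 hu.2

lemma integrand_contOn {m : ℕ} (hm : m ≤ 2 * n) {x : ℝ} (hx : 0 ≤ x) (j : ℕ) :
    ContinuousOn (fun u => psG g m (psTh β γ x u) * psW j u) (Set.Icc 0 1) :=
  (comp_contOn hβ hγ hg hm hx).mul (psW_cont j).continuousOn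

lemma integrand_intble {m : ℕ} (hm : m ≤ 2 * n) {x : ℝ} (hx : 0 ≤ x) (j : ℕ) :
    IntervalIntegrable (fun u => psG g m (psTh β γ x u) * psW j u) volume 0 1 := by
  apply ContinuousOn.intervalIntegrable
  rw [Set.uIcc_of_le (zero_le_one)]
  exact integrand_contOn hβ hγ hg hm hx j

lemma ftc_gen {p : ℕ} (hp : p < 2 * n) {x : ℝ} (hx : 0 < x)
    (V V' : ℝ → ℝ) (hV : ∀ u, HasDerivAt V (V' u) u) (hVc : Continuous V)
    (hV'c : Continuous V') :
    (∫ u in (0:ℝ)..1, (V' u * psG g p (psTh β γ x u)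
        + V u * (psG g (p + 1) (psTh β γ x u) * (2 * β * Real.sqrt x))))
      = V 1 * psG g p (psTh β γ x 1) - V 0 * psG g p (psTh β γ x 0) := by
  refine intervalIntegral.integral_eq_sub_of_hasDeriv_right_of_le
      (f := fun u => V u * psG g p (psTh β γ x u)) zero_le_one ?_ ?_ ?_
  · exact hVc.continuousOn.mul (comp_contOn hβ hγ hg (le_of_lt hp) hx.le)
  · intro u hu
    have hθ : 0 < psTh β γ x u := psTh_pos hβ hγ hx hu.1 hu.2
    have hcomp : HasDerivAt (fun u => psG g p (psTh β γ x u))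
        (psG g (p + 1) (psTh β γ x u) * (2 * β * Real.sqrt x)) u :=
      (psG_hasDerivAt hg hp hθ).comp u (psTh_hasDerivAt_u x u)
    exact ((hV u).mul hcomp).hasDerivWithinAt
  · apply ContinuousOn.intervalIntegrable
    rw [Set.uIcc_of_le (zero_le_one)]
    exact (hV'c.continuousOn.mul (comp_contOn hβ hγ hg (le_of_lt hp) hx.le)).add
      (hVc.continuousOn.mul ((comp_contOn hβ hγ hg (m := p+1) (by omega) hx.le).mul continuousOn_const))

end integrands

section tident

variable {n : ℕ} {g : ℝ → ℝ} {β γ : ℝ}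
variable (hβ : 0 ≤ β) (hγ : β ^ 2 / 4 ≤ γ) (hg : ContDiffOn ℝ (2 * n) g (Set.Ici 0))
include hβ hγ hg

lemma Tident {m i : ℕ} (hm : m + 2 ≤ 2 * n) {x : ℝ} (hx : 0 < x) :
    (∫ u in (0:ℝ)..1, psG g (m + 1) (psTh β γ x u)
        * ((β * (2 * u - 1) / (2 * Real.sqrt x)) * psW (i + 1) u))
      = β ^ 2 * psJ g β γ (m + 2) (i + 2) x := by
  have hs0 : (0:ℝ) < Real.sqrt x := Real.sqrt_pos.2 hx
  have hsne : Real.sqrt x ≠ 0 := ne_of_gt hs0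
  have hF := ftc_gen hβ hγ hg (p := m + 1) (by omega) hx (psW (i + 2))
    (fun u => (1 - 2 * u) * psW (i + 1) u) (psW_deriv i) (psW_cont _)
    (by have := psW_cont (i + 1); fun_prop)
  rw [psW_zero_at_one, psW_zero_at_zero] at hF
  simp only [zero_mul, sub_zero] at hF
  set f1 : ℝ → ℝ := fun u => (1 - 2 * u) * psW (i + 1) u * psG g (m + 1) (psTh β γ x u) with hf1
  set f2 : ℝ → ℝ := fun u => psW (i + 2) u * (psG g (m + 2) (psTh β γ x u) * (2 * β * Real.sqrt x))
    with hf2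
  have hint1 : IntervalIntegrable f1 volume 0 1 := by
    apply ContinuousOn.intervalIntegrable
    rw [Set.uIcc_of_le zero_le_one]
    have hc : Continuous fun u : ℝ => (1 - 2 * u) * psW (i + 1) u :=
      (continuous_const.sub (continuous_const.mul continuous_id)).mul (psW_cont _)
    exact hc.continuousOn.mul (comp_contOn hβ hγ hg (m := m+1) (by omega) hx.le)
  have hint2 : IntervalIntegrable f2 volume 0 1 := by
    apply ContinuousOn.intervalIntegrable
    rw [Set.uIcc_of_le zero_le_one]
    exact ((psW_cont (i+2)).continuousOn.mul
      ((comp_contOn hβ hγ hg (m := m+2) (by omega) hx.le).mul continuousOn_const))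
  have hFeq : (∫ u in (0:ℝ)..1, (f1 u + f2 u)) = 0 := by
    have heq : Set.EqOn (fun u => f1 u + f2 u)
        (fun u => (1 - 2 * u) * psW (i + 1) u * psG g (m + 1) (psTh β γ x u)
          + psW (i + 2) u * (psG g (m + 1 + 1) (psTh β γ x u) * (2 * β * Real.sqrt x)))
        (Set.uIcc 0 1) := fun u _ => by
      simp only [hf1, hf2, show m + 1 + 1 = m + 2 from rfl]
    rw [intervalIntegral.integral_congr heq]
    exact hF
  rw [intervalIntegral.integral_add hint1 hint2] at hFeq
  have hI2 : (∫ u in (0:ℝ)..1, f2 u) = (2 * β * Real.sqrt x) * psJ g β γ (m + 2) (i + 2) x := by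
    have : f2 = fun u => (2 * β * Real.sqrt x) * (psG g (m + 2) (psTh β γ x u) * psW (i + 2) u) :=
      funext fun u => by simp only [hf2]; ring
    rw [this, intervalIntegral.integral_const_mul]
    rfl
  have hI1 : (∫ u in (0:ℝ)..1, f1 u)
      = - ((2 * β * Real.sqrt x) * psJ g β γ (m + 2) (i + 2) x) := by
    rw [← hI2]; linarith
  have hgoal : (fun u => psG g (m + 1) (psTh β γ x u)
        * ((β * (2 * u - 1) / (2 * Real.sqrt x)) * psW (i + 1) u))
      = fun u => (-(β / (2 * Real.sqrt x))) * f1 u := by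
    funext u
    simp only [hf1]
    field_simp
    ring
  rw [hgoal, intervalIntegral.integral_const_mul, hI1]
  field_simp

end tident

lemma psTh_le {β γ : ℝ} (hβ : 0 ≤ β) {x u : ℝ} (hx : 0 ≤ x) (hu0 : 0 ≤ u) (hu1 : u ≤ 1) :
    psTh β γ x u ≤ x + β * Real.sqrt x + γ := by
  unfold psTh
  nlinarith [Real.sqrt_nonneg x, mul_nonneg hβ (Real.sqrt_nonneg x)]

lemma ae_ne_one : ∀ᵐ u : ℝ ∂volume, u ≠ (1:ℝ) := by
  have h : volume ({(1:ℝ)} : Set ℝ) = 0 := Real.volume_singleton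
  filter_upwards [MeasureTheory.measure_eq_zero_iff_ae_notMem.mp h] with u hu
  simpa using hu

section D2

variable {n : ℕ} {g : ℝ → ℝ} {β γ : ℝ}
variable (hβ : 0 ≤ β) (hγ : β ^ 2 / 4 ≤ γ) (hg : ContDiffOn ℝ (2 * n) g (Set.Ici 0))
include hβ hγ hg

lemma psJ_hasDerivAt {m i : ℕ} (hm : m + 2 ≤ 2 * n) {x₀ : ℝ} (hx : 0 < x₀) :
    HasDerivAt (psJ g β γ m (i + 1))
      (psJ g β γ (m + 1) (i + 1) x₀ + β ^ 2 * psJ g β γ (m + 2) (i + 2) x₀) x₀ := by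
  set F' : ℝ → ℝ → ℝ := fun x u =>
    psG g (m + 1) (psTh β γ x u) * (1 + β * (2 * u - 1) * (1 / (2 * Real.sqrt x)))
      * psW (i + 1) u with hF'
  -- the bound
  set M : ℝ := 2 * x₀ + β * Real.sqrt (2 * x₀) + γ with hM
  obtain ⟨C, hC⟩ := (isCompact_Icc (a := (0:ℝ)) (b := M)).exists_bound_of_continuousOn
    ((psG_cont hg (m := m + 1) (by omega)).mono (by
      intro t ht; exact ht.1))
  have hMnn : 0 ≤ M := by
    have : (0:ℝ) ≤ γ := le_trans (by positivity) hγ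
    have := Real.sqrt_nonneg (2 * x₀)
    nlinarith
  have hsx0 : (0:ℝ) < Real.sqrt (x₀ / 2) := Real.sqrt_pos.2 (by linarith)
  set C2 : ℝ := 1 + β * (1 / (2 * Real.sqrt (x₀ / 2))) with hC2
  have hC2pos : 0 < C2 := by
    rw [hC2]; positivity
  have hCnn : 0 ≤ C := le_trans (abs_nonneg _) (hC 0 (by constructor <;> [rfl; exact hMnn]))
  -- facts about x in the ball
  have hball : ∀ x ∈ Metric.ball x₀ (x₀ / 2), x₀ / 2 < x ∧ x < 2 * x₀ := by
    intro x hxb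
    rw [Metric.mem_ball, Real.dist_eq, abs_lt] at hxb
    constructor <;> linarith [hxb.1, hxb.2]
  have key := intervalIntegral.hasDerivAt_integral_of_dominated_loc_of_deriv_le
    (F := fun x => fun u => psG g m (psTh β γ x u) * psW (i + 1) u)
    (F' := F') (x₀ := x₀) (a := 0) (b := 1) (μ := volume)
    (bound := fun _ => C * C2) (Metric.ball_mem_nhds x₀ (half_pos hx))
    ?_ (integrand_intble hβ hγ hg (by omega) hx.le (i + 1)) ?_ ?_ ?_ ?_
  · have h2 := key.2
    have : (∫ u in (0:ℝ)..1, F' x₀ u)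
        = psJ g β γ (m + 1) (i + 1) x₀ + β ^ 2 * psJ g β γ (m + 2) (i + 2) x₀ := by
      have hsplit : Set.EqOn (fun u => F' x₀ u)
          (fun u => psG g (m + 1) (psTh β γ x₀ u) * psW (i + 1) u
            + psG g (m + 1) (psTh β γ x₀ u)
              * ((β * (2 * u - 1) / (2 * Real.sqrt x₀)) * psW (i + 1) u))
          (Set.uIcc 0 1) := by
        intro u _
        simp only [hF']
        ring
      rw [intervalIntegral.integral_congr hsplit,
        intervalIntegral.integral_add (integrand_intble hβ hγ hg (by omega) hx.le (i + 1)) ?_,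
        Tident hβ hγ hg hm hx]
      · rfl
      · apply ContinuousOn.intervalIntegrable
        rw [Set.uIcc_of_le zero_le_one]
        have hc : Continuous fun u : ℝ => (β * (2 * u - 1) / (2 * Real.sqrt x₀)) * psW (i + 1) u := by
          have := psW_cont (i + 1); fun_prop
        exact (comp_contOn hβ hγ hg (m := m + 1) (by omega) hx.le).mul hc.continuousOn
    rw [this] at h2
    exact h2
  · -- hF_meas
    filter_upwards [isOpen_Ioi.eventually_mem hx] with x hx'
    apply ContinuousOn.aestronglyMeasurable ?_ measurableSet_uIoc
    rw [Set.uIoc_of_le zero_le_one]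
    exact (integrand_contOn hβ hγ hg (by omega) (le_of_lt hx') (i + 1)).mono Set.Ioc_subset_Icc_self
  · -- hF'_meas
    apply ContinuousOn.aestronglyMeasurable ?_ measurableSet_uIoc
    rw [Set.uIoc_of_le zero_le_one]
    have hc : Continuous fun u : ℝ => (1 + β * (2 * u - 1) * (1 / (2 * Real.sqrt x₀))) := by
      fun_prop
    refine ContinuousOn.mono ?_ Set.Ioc_subset_Icc_self
    exact ((comp_contOn hβ hγ hg (m := m + 1) (by omega) hx.le).mul hc.continuousOn).mul
      (psW_cont (i + 1)).continuousOn
  · -- h_bound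
    filter_upwards with u
    intro hu x hxb
    obtain ⟨hx1, hx2⟩ := hball x hxb
    have hxpos : 0 < x := lt_trans (by linarith) hx1
    rw [Set.uIoc_of_le zero_le_one] at hu
    have hu0 : 0 ≤ u := le_of_lt hu.1
    have hu1 : u ≤ 1 := hu.2
    have hθmem : psTh β γ x u ∈ Set.Icc 0 M := by
      constructor
      · exact psTh_nonneg hβ hγ hxpos.le hu0 hu1
      · refine le_trans (psTh_le hβ hxpos.le hu0 hu1) ?_
        have hsq : Real.sqrt x ≤ Real.sqrt (2 * x₀) := Real.sqrt_le_sqrt (by linarith)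
        have : β * Real.sqrt x ≤ β * Real.sqrt (2 * x₀) := by
          exact mul_le_mul_of_nonneg_left hsq hβ
        rw [hM]; linarith
    have hG : |psG g (m + 1) (psTh β γ x u)| ≤ C := hC _ hθmem
    have hsqx : Real.sqrt (x₀ / 2) ≤ Real.sqrt x := Real.sqrt_le_sqrt (by linarith)
    have hsqxpos : 0 < Real.sqrt x := lt_of_lt_of_le hsx0 hsqx
    have hfac : |1 + β * (2 * u - 1) * (1 / (2 * Real.sqrt x))| ≤ C2 := by
      have habs : |β * (2 * u - 1) * (1 / (2 * Real.sqrt x))| ≤ β * (1 / (2 * Real.sqrt (x₀ / 2))) := by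
        rw [abs_mul, abs_mul, abs_of_nonneg hβ, abs_of_nonneg (by positivity : (0:ℝ) ≤ 1 / (2 * Real.sqrt x))]
        have h1 : |2 * u - 1| ≤ 1 := by rw [abs_le]; constructor <;> linarith
        have h2 : (1:ℝ) / (2 * Real.sqrt x) ≤ 1 / (2 * Real.sqrt (x₀ / 2)) := by
          apply one_div_le_one_div_of_le (by positivity)
          linarith
        calc β * |2 * u - 1| * (1 / (2 * Real.sqrt x))
            ≤ β * 1 * (1 / (2 * Real.sqrt x)) := by
              apply mul_le_mul_of_nonneg_right _ (by positivity)
              exact mul_le_mul_of_nonneg_left h1 hβ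
          _ ≤ β * 1 * (1 / (2 * Real.sqrt (x₀ / 2))) := by
              apply mul_le_mul_of_nonneg_left h2 (by positivity)
          _ = β * (1 / (2 * Real.sqrt (x₀ / 2))) := by ring
      calc |1 + β * (2 * u - 1) * (1 / (2 * Real.sqrt x))|
          ≤ |(1:ℝ)| + |β * (2 * u - 1) * (1 / (2 * Real.sqrt x))| := abs_add_le _ _
        _ ≤ 1 + β * (1 / (2 * Real.sqrt (x₀ / 2))) := by rw [abs_one]; linarith
        _ = C2 := rfl
    have hW : |psW (i + 1) u| ≤ 1 := psW_bound hu0 hu1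
    show ‖F' x u‖ ≤ C * C2
    rw [hF', Real.norm_eq_abs, abs_mul, abs_mul]
    calc |psG g (m + 1) (psTh β γ x u)| * |1 + β * (2 * u - 1) * (1 / (2 * Real.sqrt x))|
          * |psW (i + 1) u|
        ≤ C * C2 * 1 := by
          apply mul_le_mul _ hW (abs_nonneg _) (by positivity)
          exact mul_le_mul hG hfac (abs_nonneg _) hCnn
      _ = C * C2 := mul_one _
  · -- bound integrable
    exact intervalIntegrable_const
  · -- h_diff
    filter_upwards [ae_ne_one] with u hu1
    intro hu x hxb
    obtain ⟨hx1, hx2⟩ := hball x hxb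
    have hxpos : 0 < x := lt_trans (by linarith) hx1
    rw [Set.uIoc_of_le zero_le_one] at hu
    have huo : u ∈ Set.Ioo (0:ℝ) 1 := ⟨hu.1, lt_of_le_of_ne hu.2 hu1⟩
    have hθ : 0 < psTh β γ x u := psTh_pos hβ hγ hxpos huo.1 huo.2
    have hsq : HasDerivAt Real.sqrt (1 / (2 * Real.sqrt x)) x :=
      Real.hasDerivAt_sqrt (ne_of_gt hxpos)
    have hθx : HasDerivAt (fun x => psTh β γ x u)
        (1 + β * (2 * u - 1) * (1 / (2 * Real.sqrt x))) x := by
      unfold psTh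
      exact ((hasDerivAt_id x).add (hsq.const_mul (β * (2 * u - 1)))).add_const γ
    exact ((psG_hasDerivAt hg (by omega : m < 2 * n) hθ).comp x hθx).mul_const (psW (i + 1) u)

lemma psG_valEq {k : ℕ} (hk : k + 2 ≤ 2 * n) {x : ℝ} (hx : 0 < x) :
    psG g (k + 1) (x + β * Real.sqrt x + γ) * (1 + β * (1 / (2 * Real.sqrt x)))
      + psG g (k + 1) (x - β * Real.sqrt x + γ) * (1 - β * (1 / (2 * Real.sqrt x)))
    = (psG g (k + 1) (x + β * Real.sqrt x + γ) + psG g (k + 1) (x - β * Real.sqrt x + γ))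
      + β ^ 2 * psJ g β γ (k + 2) 1 x := by
  have hsne : Real.sqrt x ≠ 0 := ne_of_gt (Real.sqrt_pos.2 hx)
  have hF := ftc_gen hβ hγ hg (p := k + 1) (by omega) hx (fun _ => 1) (fun _ => 0)
    (fun u => hasDerivAt_const u 1) continuous_const continuous_const
  have heq : Set.EqOn
      (fun u => (0:ℝ) * psG g (k + 1) (psTh β γ x u)
        + 1 * (psG g (k + 1 + 1) (psTh β γ x u) * (2 * β * Real.sqrt x)))
      (fun u => (2 * β * Real.sqrt x) * (psG g (k + 2) (psTh β γ x u) * psW 1 u))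
      (Set.uIcc 0 1) := by
    intro u _
    simp only [show k + 1 + 1 = k + 2 from rfl, psW_one]
    ring
  rw [intervalIntegral.integral_congr heq, intervalIntegral.integral_const_mul] at hF
  have hd : psG g (k + 1) (x + β * Real.sqrt x + γ) - psG g (k + 1) (x - β * Real.sqrt x + γ)
      = 2 * β * Real.sqrt x * psJ g β γ (k + 2) 1 x := by
    rw [← psTh_one (β := β) (γ := γ) x, ← psTh_zero (β := β) (γ := γ) x]
    simp only [one_mul] at hF
    rw [← hF]
    rfl
  have hd2 : β * (1 / (2 * Real.sqrt x))
        * (psG g (k + 1) (x + β * Real.sqrt x + γ) - psG g (k + 1) (x - β * Real.sqrt x + γ))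
      = β ^ 2 * psJ g β γ (k + 2) 1 x := by
    rw [hd]
    field_simp
  linear_combination hd2

lemma psPsi_hasDerivWithinAt {k : ℕ} (hk : k + 2 ≤ 2 * n) {x : ℝ} (hx : 0 < x) :
    HasDerivWithinAt (fun x => psG g k (x + β * Real.sqrt x + γ) + psG g k (x - β * Real.sqrt x + γ))
      ((psG g (k + 1) (x + β * Real.sqrt x + γ) + psG g (k + 1) (x - β * Real.sqrt x + γ))
        + β ^ 2 * psJ g β γ (k + 2) 1 x) (Set.Ici 0) x := by
  have hsq : HasDerivAt Real.sqrt (1 / (2 * Real.sqrt x)) x := Real.hasDerivAt_sqrt (ne_of_gt hx)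
  have ha : HasDerivWithinAt (fun x => x + β * Real.sqrt x + γ)
      (1 + β * (1 / (2 * Real.sqrt x))) (Set.Ici 0) x :=
    (((hasDerivAt_id x).add (hsq.const_mul β)).add_const γ).hasDerivWithinAt
  have hb : HasDerivWithinAt (fun x => x - β * Real.sqrt x + γ)
      (1 - β * (1 / (2 * Real.sqrt x))) (Set.Ici 0) x :=
    (((hasDerivAt_id x).sub (hsq.const_mul β)).add_const γ).hasDerivWithinAt
  have hmA : Set.MapsTo (fun x => x + β * Real.sqrt x + γ) (Set.Ici 0) (Set.Ici 0) := by
    intro y hy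
    have hy' : (0:ℝ) ≤ y := hy
    have h0γ : (0:ℝ) ≤ γ := le_trans (by positivity) hγ
    have := Real.sqrt_nonneg y
    have := mul_nonneg hβ (Real.sqrt_nonneg y)
    simp only [Set.mem_Ici]
    linarith
  have hmB : Set.MapsTo (fun x => x - β * Real.sqrt x + γ) (Set.Ici 0) (Set.Ici 0) := by
    intro y hy
    have hy' : (0:ℝ) ≤ y := hy
    have := psTh_nonneg hβ hγ (u := 0) hy' le_rfl zero_le_one
    rw [psTh_zero] at this
    exact this
  have hmemA : x + β * Real.sqrt x + γ ∈ Set.Ici (0:ℝ) := hmA (le_of_lt hx)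
  have hmemB : x - β * Real.sqrt x + γ ∈ Set.Ici (0:ℝ) := hmB (le_of_lt hx)
  have h1 : HasDerivWithinAt (fun x => psG g k (x + β * Real.sqrt x + γ))
      (psG g (k + 1) (x + β * Real.sqrt x + γ) * (1 + β * (1 / (2 * Real.sqrt x))))
      (Set.Ici 0) x := by
    have := HasDerivWithinAt.comp x (psG_hasDeriv hg (m := k) (by omega) hmemA) ha hmA
    simpa [Function.comp_def] using this
  have h2 : HasDerivWithinAt (fun x => psG g k (x - β * Real.sqrt x + γ))
      (psG g (k + 1) (x - β * Real.sqrt x + γ) * (1 - β * (1 / (2 * Real.sqrt x))))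
      (Set.Ici 0) x := by
    have := HasDerivWithinAt.comp x (psG_hasDeriv hg (m := k) (by omega) hmemB) hb hmB
    simpa [Function.comp_def] using this
  have h3 := h1.add h2
  rwa [psG_valEq hβ hγ hg hk hx] at h3

lemma psPsi_hasDerivAt {k : ℕ} (hk : k + 2 ≤ 2 * n) {x : ℝ} (hx : 0 < x)
    (hbx : 0 < x - β * Real.sqrt x + γ) :
    HasDerivAt (fun x => psG g k (x + β * Real.sqrt x + γ) + psG g k (x - β * Real.sqrt x + γ))
      ((psG g (k + 1) (x + β * Real.sqrt x + γ) + psG g (k + 1) (x - β * Real.sqrt x + γ))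
        + β ^ 2 * psJ g β γ (k + 2) 1 x) x := by
  have hsq : HasDerivAt Real.sqrt (1 / (2 * Real.sqrt x)) x := Real.hasDerivAt_sqrt (ne_of_gt hx)
  have ha : HasDerivAt (fun x => x + β * Real.sqrt x + γ)
      (1 + β * (1 / (2 * Real.sqrt x))) x :=
    ((hasDerivAt_id x).add (hsq.const_mul β)).add_const γ
  have hb : HasDerivAt (fun x => x - β * Real.sqrt x + γ)
      (1 - β * (1 / (2 * Real.sqrt x))) x :=
    ((hasDerivAt_id x).sub (hsq.const_mul β)).add_const γ
  have haxpos : 0 < x + β * Real.sqrt x + γ := by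
    have h0γ : (0:ℝ) ≤ γ := le_trans (by positivity) hγ
    have := mul_nonneg hβ (Real.sqrt_nonneg x)
    linarith
  have h1 : HasDerivAt (fun x => psG g k (x + β * Real.sqrt x + γ))
      (psG g (k + 1) (x + β * Real.sqrt x + γ) * (1 + β * (1 / (2 * Real.sqrt x)))) x := by
    have := (psG_hasDerivAt hg (m := k) (by omega) haxpos).comp x ha
    simpa [Function.comp_def] using this
  have h2 : HasDerivAt (fun x => psG g k (x - β * Real.sqrt x + γ))
      (psG g (k + 1) (x - β * Real.sqrt x + γ) * (1 - β * (1 / (2 * Real.sqrt x)))) x := by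
    have := (psG_hasDerivAt hg (m := k) (by omega) hbx).comp x hb
    simpa [Function.comp_def] using this
  have h3 := h1.add h2
  rwa [psG_valEq hβ hγ hg hk hx] at h3

end D2

section comb

variable {g : ℝ → ℝ} {β γ : ℝ}

lemma psF_sum_eq (k : ℕ) (x : ℝ) :
    β ^ 2 * psJ g β γ (k + 2) 1 x
      + ∑ j ∈ Finset.Icc 1 k, (k.choose j : ℝ) * β ^ (2 * j)
          * (psJ g β γ (k + j + 1) j x + β ^ 2 * psJ g β γ (k + j + 2) (j + 1) x)
      = ∑ j ∈ Finset.Icc 1 (k + 1), ((k + 1).choose j : ℝ) * β ^ (2 * j)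
          * psJ g β γ (k + 1 + j) j x := by
  set A : ℕ → ℝ := fun i => (k.choose (i + 1) : ℝ) * β ^ (2 * (i + 1))
    * psJ g β γ (k + i + 2) (i + 1) x with hA
  set A' : ℕ → ℝ := fun i => (k.choose i : ℝ) * β ^ (2 * (i + 1))
    * psJ g β γ (k + i + 2) (i + 1) x with hA'
  have h1 : ∑ j ∈ Finset.Icc 1 k, (k.choose j : ℝ) * β ^ (2 * j)
          * (psJ g β γ (k + j + 1) j x + β ^ 2 * psJ g β γ (k + j + 2) (j + 1) x)
      = ∑ i ∈ Finset.range k, (A i + A' (i + 1)) := by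
    rw [← Finset.Ico_add_one_right_eq_Icc, Finset.sum_Ico_eq_sum_range]
    refine Finset.sum_congr rfl fun i _ => ?_
    rw [show 1 + i = i + 1 from by omega]
    simp only [hA, hA']
    rw [show k + (i + 1) + 1 = k + i + 2 from by omega,
        show k + (i + 1) + 2 = k + (i + 1) + 2 from rfl]
    ring
  have h2 : ∑ j ∈ Finset.Icc 1 (k + 1), ((k + 1).choose j : ℝ) * β ^ (2 * j)
          * psJ g β γ (k + 1 + j) j x
      = ∑ i ∈ Finset.range (k + 1), (((k + 1).choose (i + 1) : ℝ) * β ^ (2 * (i + 1))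
          * psJ g β γ (k + i + 2) (i + 1) x) := by
    rw [← Finset.Ico_add_one_right_eq_Icc, Finset.sum_Ico_eq_sum_range]
    refine Finset.sum_congr rfl fun i _ => ?_
    rw [show 1 + i = i + 1 from by omega, show k + 1 + (i + 1) = k + i + 2 from by omega]
  have h3 : A' 0 = β ^ 2 * psJ g β γ (k + 2) 1 x := by
    simp only [hA']
    norm_num
  have h4 : A k = 0 := by
    simp only [hA, Nat.choose_succ_self, Nat.cast_zero, zero_mul]
  rw [h1, h2, Finset.sum_add_distrib]
  have h5 : ∑ i ∈ Finset.range k, A' (i + 1)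
      = (∑ i ∈ Finset.range (k + 1), A' i) - A' 0 := by
    rw [Finset.sum_range_succ' A' k]
    ring
  have h6 : ∑ i ∈ Finset.range k, A i = ∑ i ∈ Finset.range (k + 1), A i := by
    rw [Finset.sum_range_succ, h4, add_zero]
  rw [h5, h6, h3]
  have h7 : ∀ i ∈ Finset.range (k + 1), A i + A' i
      = ((k + 1).choose (i + 1) : ℝ) * β ^ (2 * (i + 1)) * psJ g β γ (k + i + 2) (i + 1) x := by
    intro i _
    simp only [hA, hA', Nat.choose_succ_succ k i]
    push_cast
    ring
  have h9 := Finset.sum_congr rfl h7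
  rw [← h9, Finset.sum_add_distrib]
  ring

end comb

section main

variable {n : ℕ} {g : ℝ → ℝ} {β γ : ℝ}
variable (hβ : 0 ≤ β) (hγ : β ^ 2 / 4 ≤ γ) (hg : ContDiffOn ℝ (2 * n) g (Set.Ici 0))
include hβ hγ hg

lemma psF_hasDerivWithinAt_pos {k : ℕ} (hk : k + 1 ≤ n) {x : ℝ} (hx : 0 < x) :
    HasDerivWithinAt (psF g β γ k) (psF g β γ (k + 1) x) (Set.Ici 0) x := by
  have hΨ := psPsi_hasDerivWithinAt hβ hγ hg (k := k) (by omega) hx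
  have hsum : HasDerivWithinAt
      (fun x => ∑ j ∈ Finset.Icc 1 k, (k.choose j : ℝ) * β ^ (2 * j) * psJ g β γ (k + j) j x)
      (∑ j ∈ Finset.Icc 1 k, (k.choose j : ℝ) * β ^ (2 * j)
        * (psJ g β γ (k + j + 1) j x + β ^ 2 * psJ g β γ (k + j + 2) (j + 1) x))
      (Set.Ici 0) x := by
    apply HasDerivWithinAt.fun_sum
    intro j hj
    obtain ⟨hj1, hj2⟩ := Finset.mem_Icc.1 hj
    obtain ⟨i, rfl⟩ : ∃ i, j = i + 1 := ⟨j - 1, by omega⟩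
    have h0 := (psJ_hasDerivAt hβ hγ hg (m := k + (i + 1)) (i := i) (by omega) hx).hasDerivWithinAt (s := Set.Ici 0)
    exact h0.const_mul (((k.choose (i + 1)) : ℝ) * β ^ (2 * (i + 1)))
  have htot := hΨ.add hsum
  have hval : (((psG g (k + 1) (x + β * Real.sqrt x + γ)
        + psG g (k + 1) (x - β * Real.sqrt x + γ)) + β ^ 2 * psJ g β γ (k + 2) 1 x)
      + ∑ j ∈ Finset.Icc 1 k, (k.choose j : ℝ) * β ^ (2 * j)
        * (psJ g β γ (k + j + 1) j x + β ^ 2 * psJ g β γ (k + j + 2) (j + 1) x))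
      = psF g β γ (k + 1) x := by
    rw [psF, ← psF_sum_eq k x]
    ring
  rw [hval] at htot
  exact htot

lemma psF_hasDerivAt_pos {k : ℕ} (hk : k + 1 ≤ n) {x : ℝ} (hx : 0 < x)
    (hbx : 0 < x - β * Real.sqrt x + γ) :
    HasDerivAt (psF g β γ k) (psF g β γ (k + 1) x) x := by
  have hΨ := psPsi_hasDerivAt hβ hγ hg (k := k) (by omega) hx hbx
  have hsum : HasDerivAt
      (fun x => ∑ j ∈ Finset.Icc 1 k, (k.choose j : ℝ) * β ^ (2 * j) * psJ g β γ (k + j) j x)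
      (∑ j ∈ Finset.Icc 1 k, (k.choose j : ℝ) * β ^ (2 * j)
        * (psJ g β γ (k + j + 1) j x + β ^ 2 * psJ g β γ (k + j + 2) (j + 1) x)) x := by
    apply HasDerivAt.fun_sum
    intro j hj
    obtain ⟨hj1, hj2⟩ := Finset.mem_Icc.1 hj
    obtain ⟨i, rfl⟩ : ∃ i, j = i + 1 := ⟨j - 1, by omega⟩
    have h0 := psJ_hasDerivAt hβ hγ hg (m := k + (i + 1)) (i := i) (by omega) hx
    exact h0.const_mul (((k.choose (i + 1)) : ℝ) * β ^ (2 * (i + 1)))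
  have htot := hΨ.add hsum
  have hval : (((psG g (k + 1) (x + β * Real.sqrt x + γ)
        + psG g (k + 1) (x - β * Real.sqrt x + γ)) + β ^ 2 * psJ g β γ (k + 2) 1 x)
      + ∑ j ∈ Finset.Icc 1 k, (k.choose j : ℝ) * β ^ (2 * j)
        * (psJ g β γ (k + j + 1) j x + β ^ 2 * psJ g β γ (k + j + 2) (j + 1) x))
      = psF g β γ (k + 1) x := by
    rw [psF, ← psF_sum_eq k x]
    ring
  rw [hval] at htot
  exact htot

lemma psJ_contOn {m : ℕ} (hm : m ≤ 2 * n) (j : ℕ) :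
    ContinuousOn (psJ g β γ m j) (Set.Ici 0) := by
  intro x₀ hx₀
  have hx₀' : (0:ℝ) ≤ x₀ := hx₀
  set M : ℝ := (x₀ + 1) + β * Real.sqrt (x₀ + 1) + γ with hM
  obtain ⟨C, hC⟩ := (isCompact_Icc (a := (0:ℝ)) (b := M)).exists_bound_of_continuousOn
    ((psG_cont hg hm).mono (fun t ht => ht.1))
  have hMnn : 0 ≤ M := by
    have h0γ : (0:ℝ) ≤ γ := le_trans (by positivity) hγ
    have := Real.sqrt_nonneg (x₀ + 1)
    have := mul_nonneg hβ (Real.sqrt_nonneg (x₀ + 1))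
    rw [hM]; linarith
  have hCnn : 0 ≤ C := le_trans (norm_nonneg _) (hC 0 ⟨le_rfl, hMnn⟩)
  show ContinuousWithinAt (psJ g β γ m j) (Set.Ici 0) x₀
  unfold psJ
  apply intervalIntegral.continuousWithinAt_of_dominated_interval (bound := fun _ => C)
  · filter_upwards [self_mem_nhdsWithin] with x hx
    apply ContinuousOn.aestronglyMeasurable ?_ measurableSet_uIoc
    rw [Set.uIoc_of_le zero_le_one]
    exact (integrand_contOn hβ hγ hg hm hx j).mono Set.Ioc_subset_Icc_self
  · have hev : {x : ℝ | x ∈ Set.Iic (x₀ + 1)} ∈ 𝓝[Set.Ici 0] x₀ :=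
      mem_nhdsWithin_of_mem_nhds (Iic_mem_nhds (by linarith))
    filter_upwards [hev, self_mem_nhdsWithin] with x hx1 hx2
    filter_upwards with u
    intro hu
    rw [Set.uIoc_of_le zero_le_one] at hu
    have hu0 : 0 ≤ u := le_of_lt hu.1
    have hu1 : u ≤ 1 := hu.2
    have hx0 : (0:ℝ) ≤ x := hx2
    have hθ : psTh β γ x u ∈ Set.Icc 0 M := by
      constructor
      · exact psTh_nonneg hβ hγ hx0 hu0 hu1
      · refine le_trans (psTh_le hβ hx0 hu0 hu1) ?_
        have hsq : Real.sqrt x ≤ Real.sqrt (x₀ + 1) := Real.sqrt_le_sqrt hx1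
        have := mul_le_mul_of_nonneg_left hsq hβ
        rw [hM]
        have hxle : x ≤ x₀ + 1 := hx1
        linarith
    have hG : ‖psG g m (psTh β γ x u)‖ ≤ C := hC _ hθ
    have hW : |psW j u| ≤ 1 := psW_bound hu0 hu1
    rw [Real.norm_eq_abs, abs_mul]
    calc |psG g m (psTh β γ x u)| * |psW j u| ≤ C * 1 :=
          mul_le_mul (by rwa [Real.norm_eq_abs] at hG) hW (abs_nonneg _) hCnn
      _ = C := mul_one _
  · exact intervalIntegrable_const
  · filter_upwards with u
    intro hu
    rw [Set.uIoc_of_le zero_le_one] at hu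
    have hu0 : 0 ≤ u := le_of_lt hu.1
    have hu1 : u ≤ 1 := hu.2
    apply ContinuousWithinAt.mul ?_ continuousWithinAt_const
    refine ContinuousWithinAt.comp ((psG_cont hg hm) _ (psTh_nonneg hβ hγ hx₀' hu0 hu1))
      (psTh_cont_x u).continuousWithinAt ?_
    intro y hy
    exact psTh_nonneg hβ hγ hy hu0 hu1

lemma psMapsTo_a : Set.MapsTo (fun x : ℝ => x + β * Real.sqrt x + γ) (Set.Ici 0) (Set.Ici 0) := by
  intro y hy
  have hy' : (0:ℝ) ≤ y := hy
  have h0γ : (0:ℝ) ≤ γ := le_trans (by positivity) hγ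
  have := mul_nonneg hβ (Real.sqrt_nonneg y)
  simp only [Set.mem_Ici]
  linarith

lemma psMapsTo_b : Set.MapsTo (fun x : ℝ => x - β * Real.sqrt x + γ) (Set.Ici 0) (Set.Ici 0) := by
  intro y hy
  have hy' : (0:ℝ) ≤ y := hy
  have h := psTh_nonneg hβ hγ (u := 0) hy' le_rfl zero_le_one
  rw [psTh_zero] at h
  exact h

lemma psF_contOn {k : ℕ} (hk : k ≤ n) : ContinuousOn (psF g β γ k) (Set.Ici 0) := by
  unfold psF
  apply ContinuousOn.add
  · have hca : Continuous (fun x : ℝ => x + β * Real.sqrt x + γ) :=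
      (continuous_id.add (continuous_const.mul Real.continuous_sqrt)).add continuous_const
    have hcb : Continuous (fun x : ℝ => x - β * Real.sqrt x + γ) :=
      (continuous_id.sub (continuous_const.mul Real.continuous_sqrt)).add continuous_const
    exact ((psG_cont hg (by omega)).comp hca.continuousOn (psMapsTo_a hβ hγ hg)).add
      ((psG_cont hg (by omega)).comp hcb.continuousOn (psMapsTo_b hβ hγ hg))
  · apply continuousOn_finset_sum
    intro j hj
    obtain ⟨hj1, hj2⟩ := Finset.mem_Icc.1 hj
    exact continuousOn_const.mul (psJ_contOn hβ hγ hg (by omega) j)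

lemma exists_eps : ∃ ε : ℝ, 0 < ε ∧ ∀ x : ℝ, 0 < x → x < ε → 0 < x - β * Real.sqrt x + γ := by
  rcases eq_or_lt_of_le (le_trans (by positivity : (0:ℝ) ≤ β ^ 2 / 4) hγ) with h0 | h0
  · have hβ0 : β = 0 := by nlinarith [sq_nonneg β]
    refine ⟨1, one_pos, fun x hx _ => ?_⟩
    rw [hβ0, ← h0]
    simpa using hx
  · refine ⟨(γ / (β + 1)) ^ 2, by positivity, fun x hx hxe => ?_⟩
    have hsx : Real.sqrt x < γ / (β + 1) := by
      have h := Real.sqrt_lt_sqrt hx.le hxe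
      rwa [Real.sqrt_sq (by positivity)] at h
    have hb1 : (0:ℝ) < β + 1 := by linarith
    have h1 : β * Real.sqrt x ≤ β * (γ / (β + 1)) :=
      mul_le_mul_of_nonneg_left hsx.le hβ
    have h2 : β * (γ / (β + 1)) < γ := by
      rw [show β * (γ / (β + 1)) = β * γ / (β + 1) from by ring, div_lt_iff₀ hb1]
      nlinarith
    linarith

lemma psF_hasDerivWithinAt {k : ℕ} (hk : k + 1 ≤ n) {x : ℝ} (hx : 0 ≤ x) :
    HasDerivWithinAt (psF g β γ k) (psF g β γ (k + 1) x) (Set.Ici 0) x := by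
  rcases eq_or_lt_of_le hx with h0 | h0
  · subst h0
    obtain ⟨ε, hε, hbpos⟩ := exists_eps hβ hγ hg
    apply hasDerivWithinAt_Ici_of_tendsto_deriv (s := Set.Ioo 0 ε)
    · intro y hy
      exact (psF_hasDerivAt_pos hβ hγ hg hk hy.1 (hbpos y hy.1 hy.2)).differentiableAt.differentiableWithinAt
    · exact ((psF_contOn hβ hγ hg (by omega)) 0 Set.self_mem_Ici).mono
        (fun y hy => le_of_lt hy.1)
    · exact Ioo_mem_nhdsGT_of_mem ⟨le_rfl, hε⟩
    · have heq : ∀ᶠ y in 𝓝[>] (0:ℝ), psF g β γ (k + 1) y = deriv (psF g β γ k) y := by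
        filter_upwards [Ioo_mem_nhdsGT_of_mem (Set.mem_Ico.2 ⟨le_rfl, hε⟩)] with y hy
        exact ((psF_hasDerivAt_pos hβ hγ hg hk hy.1 (hbpos y hy.1 hy.2)).deriv).symm
      refine Filter.Tendsto.congr' heq ?_
      have hcont := (psF_contOn hβ hγ hg (show k + 1 ≤ n from hk)) 0 Set.self_mem_Ici
      exact hcont.mono (fun y (hy : y ∈ Set.Ioi (0:ℝ)) => Set.mem_Ici.2 (le_of_lt hy))
  · exact psF_hasDerivWithinAt_pos hβ hγ hg hk h0

lemma psF_iter_eq {k : ℕ} (hk : k ≤ n) : ∀ x ∈ Set.Ici (0:ℝ),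
    iteratedDerivWithin k
      (fun y => g (y + β * Real.sqrt y + γ) + g (y - β * Real.sqrt y + γ)) (Set.Ici 0) x
    = psF g β γ k x := by
  induction k with
  | zero =>
    intro x hx
    simp [psF, psG]
  | succ k IH =>
    intro x hx
    rw [iteratedDerivWithin_succ]
    rw [derivWithin_congr (fun y hy => IH (by omega) y hy) (IH (by omega) x hx)]
    exact (psF_hasDerivWithinAt hβ hγ hg (by omega) hx).derivWithin (uniqueDiffOn_Ici 0 x hx)

lemma psF_contDiffOn : ∀ d : ℕ, d ≤ n → ContDiffOn ℝ d (psF g β γ (n - d)) (Set.Ici 0) := by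
  intro d
  induction d with
  | zero =>
    intro _
    exact contDiffOn_zero.2 (psF_contOn hβ hγ hg (by omega))
  | succ d IH =>
    intro hd
    rw [show ((d + 1 : ℕ) : WithTop ℕ∞) = ((d : ℕ) : WithTop ℕ∞) + 1 from by push_cast; rfl]
    refine (contDiffOn_succ_iff_derivWithin (uniqueDiffOn_Ici 0)).2 ⟨?_, ?_, ?_⟩
    · intro x hx
      exact (psF_hasDerivWithinAt hβ hγ hg (k := n - (d + 1)) (by omega) hx).differentiableWithinAt
    · intro h
      exact absurd h (by simp)
    · refine (IH (by omega)).congr ?_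
      intro x hx
      have h := (psF_hasDerivWithinAt hβ hγ hg (k := n - (d + 1)) (by omega) hx).derivWithin
        (uniqueDiffOn_Ici 0 x hx)
      rw [h, show n - (d + 1) + 1 = n - d from by omega]

end main

/-- For `g` of class `C^{2n}` on `ℝ₊`, `β ≥ 0`, `γ ≥ β²/4`, the function
`ψ_g(x) = g(x + β√x + γ) + g(x − β√x + γ)` is `C^n` on `ℝ₊` and its `n`-th derivative
is given by the stated integral formula. -/
theorem stmt_5 (n : ℕ) (g : ℝ → ℝ) (hg : ContDiffOn ℝ (2 * n) g (Set.Ici 0))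
    (β γ : ℝ) (hβ : 0 ≤ β) (hγ : β ^ 2 / 4 ≤ γ) :
    ContDiffOn ℝ n
        (fun x => g (x + β * Real.sqrt x + γ) + g (x - β * Real.sqrt x + γ)) (Set.Ici 0) ∧
      ∀ x : ℝ, 0 ≤ x →
        iteratedDerivWithin n
            (fun y => g (y + β * Real.sqrt y + γ) + g (y - β * Real.sqrt y + γ))
            (Set.Ici 0) x
          = (iteratedDerivWithin n g (Set.Ici 0) (x + β * Real.sqrt x + γ)
              + iteratedDerivWithin n g (Set.Ici 0) (x - β * Real.sqrt x + γ))
            + ∑ j ∈ Finset.Icc 1 n, (n.choose j : ℝ) * β ^ (2 * j) *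
                ∫ u in (0:ℝ)..1,
                  iteratedDerivWithin (n + j) g (Set.Ici 0)
                      (x + β * (2 * u - 1) * Real.sqrt x + γ)
                    * (u - u ^ 2) ^ (j - 1) / (Nat.factorial (j - 1)) := by
  constructor
  · have h := psF_contDiffOn hβ hγ hg n le_rfl
    rw [Nat.sub_self] at h
    refine h.congr ?_
    intro x hx
    simp [psF, psG]
  · intro x hx
    rw [psF_iter_eq hβ hγ hg le_rfl x hx]
    simp only [psF, psJ, psG, psW, psTh, mul_div_assoc]
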